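/- Let a(n)/b(n) be a reduced rational representation (gcd(a,b)=1) over a field K of characteristic zero, N = dis(a(n-1), b(n)) ≥ 0, and let A₀, B₀, d₀, ..., d_N be produced by Abramov's algorithm applied with A_{N+1}(n) = a(n-1), B_{N+1}(n) = b(n). Let G(n) = ∏_{i=0}^{N} [d_i(n)]^{\underline{i+1}}. Then a(n)/b(n) = (G(n+1)/G(n)) · (A₀(n+1)/B₀(n)) with gcd(A₀(n+1), B₀(n+h)) = 1 for all h ≥ 0; i.e., Abramov's algorithm yields a Gosper representation of a(n)/b(n). -/

import Mathlib

open Polynomial Finset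

private lemma isCoprime_comp' {K : Type*} [Field K] {p q : K[X]} (r : K[X])
    (h : IsCoprime p q) : IsCoprime (p.comp r) (q.comp r) := by
  obtain ⟨u, v, huv⟩ := h
  exact ⟨u.comp r, v.comp r, by
    rw [← mul_comp, ← mul_comp, ← add_comp, huv, one_comp]⟩

private lemma dvd_comp' {K : Type*} [Field K] {p q : K[X]} (r : K[X])
    (h : p ∣ q) : p.comp r ∣ q.comp r := by
  obtain ⟨c, rfl⟩ := h
  exact ⟨c.comp r, by rw [mul_comp]⟩

/-- Abramov's algorithm yields a Gosper representation:
`a(n)/b(n) = (G(n+1)/G(n))·(A₀(n+1)/B₀(n))` with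
`gcd(A₀(n+1), B₀(n+h)) = 1` for all `h ≥ 0`. -/
theorem abramov_gosper_representation {K : Type*} [Field K] [CharZero K] [DecidableEq K]
    (a b : K[X]) (ha : a ≠ 0) (hb : b ≠ 0) (hab : IsCoprime a b) (N : ℕ)
    (hmax : 0 < (gcd (a.comp (X - 1)) (b.comp (X + C (N : K)))).degree)
    (hcop : ∀ k : ℕ, N < k → IsCoprime (a.comp (X - 1)) (b.comp (X + C (k : K))))
    (A B dd : ℕ → K[X])
    (hA : A (N + 1) = a.comp (X - 1))
    (hB : B (N + 1) = b)
    (hd : ∀ i ≤ N, dd i = gcd (A (i + 1)) ((B (i + 1)).comp (X + C (i : K))))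
    (hAi : ∀ i ≤ N, A (i + 1) = dd i * A i)
    (hBi : ∀ i ≤ N, B (i + 1) = (dd i).comp (X - C (i : K)) * B i)
    (G : K[X])
    (hG : G = ∏ i ∈ range (N + 1), ∏ j ∈ range (i + 1), (dd i).comp (X - C (j : K))) :
    a * G * B 0 = b * G.comp (X + 1) * (A 0).comp (X + 1) ∧
      ∀ h : ℕ, IsCoprime ((A 0).comp (X + 1)) ((B 0).comp (X + C (h : K))) := by
  -- a.comp (X - 1) recovered by shifting back
  have hcompa : (a.comp (X - 1)).comp (X + 1) = a := by
    rw [comp_assoc]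
    simp [sub_comp]
  have haN : A (N + 1) ≠ 0 := by
    rw [hA]
    intro h0
    apply ha
    rw [← hcompa, h0, zero_comp]
  -- nonvanishing of A i, B i
  have hnz : ∀ j, j ≤ N + 1 → A (N + 1 - j) ≠ 0 ∧ B (N + 1 - j) ≠ 0 := by
    intro j
    induction j with
    | zero => intro _; exact ⟨haN, hB ▸ hb⟩
    | succ j ih =>
      intro hj
      obtain ⟨hA1, hB1⟩ := ih (by omega)
      have hle : N - j ≤ N := by omega
      have e1 : N + 1 - j = (N - j) + 1 := by omega
      rw [e1, hAi _ hle] at hA1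
      rw [e1, hBi _ hle] at hB1
      have e2 : N + 1 - (j + 1) = N - j := by omega
      rw [e2]
      exact ⟨right_ne_zero_of_mul hA1, right_ne_zero_of_mul hB1⟩
  have hnz' : ∀ i, i ≤ N + 1 → A i ≠ 0 ∧ B i ≠ 0 := by
    intro i hi
    have := hnz (N + 1 - i) (by omega)
    rwa [show N + 1 - (N + 1 - i) = i by omega] at this
  have hddnz : ∀ i, i ≤ N → dd i ≠ 0 := by
    intro i hi
    have := (hnz' (i + 1) (by omega)).1
    rw [hAi i hi] at this
    exact left_ne_zero_of_mul this
  -- divisibility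
  have hAdvd : ∀ i, i ≤ N + 1 → A 0 ∣ A i := by
    intro i
    induction i with
    | zero => intro _; exact dvd_rfl
    | succ i ih =>
      intro hi
      rw [hAi i (by omega)]
      exact (ih (by omega)).mul_left _
  have hBdvd : ∀ i, i ≤ N + 1 → B 0 ∣ B i := by
    intro i
    induction i with
    | zero => intro _; exact dvd_rfl
    | succ i ih =>
      intro hi
      rw [hBi i (by omega)]
      exact (ih (by omega)).mul_left _
  -- step invariant: after extraction, A i and (B i)(x+i) are coprime
  have hstep : ∀ i, i ≤ N → IsCoprime (A i) ((B i).comp (X + C (i : K))) := by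
    intro i hi
    have hBcomp : (B (i + 1)).comp (X + C (i : K)) = dd i * (B i).comp (X + C (i : K)) := by
      rw [hBi i hi, mul_comp, comp_assoc]
      congr 2
      simp [sub_comp]
    have hkey : dd i = normalize (dd i) * gcd (A i) ((B i).comp (X + C (i : K))) := by
      conv_lhs => rw [hd i hi, hAi i hi, hBcomp, _root_.gcd_mul_left]
    have hdd := hddnz i hi
    have h1 : dd i * 1 =
        dd i * (↑(normUnit (dd i)) * gcd (A i) ((B i).comp (X + C (i : K)))) := by
      rw [mul_one, ← mul_assoc, ← normalize_apply, ← hkey]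
    have h2 := mul_left_cancel₀ hdd h1
    have h3 : IsUnit (gcd (A i) ((B i).comp (X + C (i : K)))) :=
      IsUnit.of_mul_eq_one _ (by rw [mul_comm]; exact h2.symm)
    exact (gcd_isUnit_iff _ _).mp h3
  -- main coprimality at level 0, unshifted
  have hmain : ∀ m : ℕ, IsCoprime (A 0) ((B 0).comp (X + C (m : K))) := by
    intro m
    by_cases hm : m ≤ N
    · have h1 := hstep m hm
      have h2 := h1.of_isCoprime_of_dvd_left (hAdvd m (by omega))
      exact h2.of_isCoprime_of_dvd_right (dvd_comp' _ (hBdvd m (by omega)))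
    · have h1 := hcop m (by omega)
      rw [← hA] at h1
      have h2 := h1.of_isCoprime_of_dvd_left (hAdvd (N + 1) le_rfl)
      rw [← hB] at h2
      exact h2.of_isCoprime_of_dvd_right (dvd_comp' _ (hBdvd (N + 1) le_rfl))
  -- factorizations
  have hAfact : ∀ i, i ≤ N + 1 → A i = (∏ j ∈ range i, dd j) * A 0 := by
    intro i
    induction i with
    | zero => intro _; simp
    | succ i ih =>
      intro hi
      rw [hAi i (by omega), ih (by omega), prod_range_succ]
      ring
  have hBfact : ∀ i, i ≤ N + 1 →
      B i = (∏ j ∈ range i, (dd j).comp (X - C (j : K))) * B 0 := by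
    intro i
    induction i with
    | zero => intro _; simp
    | succ i ih =>
      intro hi
      rw [hBi i (by omega), ih (by omega), prod_range_succ]
      ring
  have ha' : a = (∏ j ∈ range (N + 1), (dd j).comp (X + 1)) * (A 0).comp (X + 1) := by
    conv_lhs => rw [← hcompa, ← hA, hAfact (N + 1) le_rfl, mul_comp, Polynomial.prod_comp]
  have hb' : b = (∏ j ∈ range (N + 1), (dd j).comp (X - C (j : K))) * B 0 := by
    rw [← hB, hBfact (N + 1) le_rfl]
  -- telescoping identity per index
  have step : ∀ i : ℕ,
      (dd i).comp (X + 1) * ∏ j ∈ range (i + 1), (dd i).comp (X - C (j : K)) =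
      (dd i).comp (X - C (i : K)) *
        (∏ j ∈ range (i + 1), (dd i).comp (X - C (j : K))).comp (X + 1) := by
    intro i
    rw [Polynomial.prod_comp]
    have h2 : ∀ j ∈ range (i + 1),
        ((dd i).comp (X - C (j : K))).comp (X + 1) =
        (dd i).comp (X + (1 - C (j : K))) := by
      intro j _
      rw [comp_assoc]
      congr 1
      rw [sub_comp, X_comp, C_comp]
      ring
    rw [prod_congr rfl h2, prod_range_succ' (fun j => (dd i).comp (X + (1 - C (j : K))))]
    rw [prod_range_succ]
    have h0 : (X + (1 - C ((0 : ℕ) : K)) : K[X]) = X + 1 := by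
      push_cast
      rw [C_0]
      ring
    have hsucc : ∀ j ∈ range i,
        (dd i).comp (X + (1 - C (((j + 1 : ℕ)) : K))) = (dd i).comp (X - C ((j : ℕ) : K)) := by
      intro j _
      congr 1
      push_cast
      rw [C_add, C_1]
      ring
    rw [h0, prod_congr rfl hsucc]
    ring
  have key : (∏ j ∈ range (N + 1), (dd j).comp (X + 1)) * G =
      (∏ j ∈ range (N + 1), (dd j).comp (X - C (j : K))) * G.comp (X + 1) := by
    rw [hG, Polynomial.prod_comp, ← prod_mul_distrib, ← prod_mul_distrib]
    exact prod_congr rfl fun i _ => step i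
  constructor
  · rw [ha', hb']
    linear_combination ((A 0).comp (X + 1) * B 0) * key
  · intro h
    cases h with
    | zero =>
      have h1 := hab
      rw [← hcompa, ← hA] at h1
      conv at h1 => rw [← hB]
      have h2 := h1.of_isCoprime_of_dvd_left (dvd_comp' _ (hAdvd (N + 1) le_rfl))
      have h3 := h2.of_isCoprime_of_dvd_right (hBdvd (N + 1) le_rfl)
      simpa using h3
    | succ m =>
      have h1 := isCoprime_comp' (X + 1) (hmain m)
      have h2 : ((B 0).comp (X + C (m : K))).comp (X + 1) =
          (B 0).comp (X + C (((m + 1 : ℕ)) : K)) := by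
        rw [comp_assoc]
        congr 1
        rw [add_comp, X_comp, C_comp]
        push_cast
        rw [C_add, C_1]
        ring
      rwa [h2] at h1
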